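/- Let M ≥ 2 and let θ : (ZMod M) × (ZMod M) → ℝ be a phase configuration on the M × M periodic lattice such that for every pair of nearest-neighbor sites the difference of phases is not congruent to π modulo 2π. Then the number of cells whose lattice curl equals +2π is equal to the number of cells whose lattice curl equals −2π. (On a torus, positive and negative phase vortices occur in equal numbers.) -/
import Mathlib


open Real Finset

/-- `wrap x` is the unique number in the interval `(-π, π]` congruent to `x` modulo `2π`. -/
noncomputable def wrap (x : ℝ) : ℝ := toIocMod Real.two_pi_pos (-Real.pi) x

/-- `x` is not congruent to `π` modulo `2π`. -/
def NotPiMod (x : ℝ) : Prop := ∀ k : ℤ, x ≠ Real.pi + 2 * Real.pi * k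

/-- The lattice curl of the cell of the `M × M` periodic lattice with lower-left corner
`(i, j)`, whose corners in cyclic order are `(i,j), (i+1,j), (i+1,j+1), (i,j+1)`. -/
noncomputable def latticeCurl {M : ℕ} (θ : ZMod M × ZMod M → ℝ) (i j : ZMod M) : ℝ :=
  wrap (θ (i + 1, j) - θ (i, j)) + wrap (θ (i + 1, j + 1) - θ (i + 1, j)) +
    wrap (θ (i, j + 1) - θ (i + 1, j + 1)) + wrap (θ (i, j) - θ (i, j + 1))

lemma wrap_mem (x : ℝ) : wrap x ∈ Set.Ioc (-Real.pi) Real.pi := by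
  have h := toIocMod_mem_Ioc Real.two_pi_pos (-Real.pi) x
  have : -Real.pi + 2 * Real.pi = Real.pi := by ring
  rwa [this] at h

lemma wrap_sub (x : ℝ) : ∃ k : ℤ, x = wrap x + k * (2 * Real.pi) := by
  refine ⟨toIocDiv Real.two_pi_pos (-Real.pi) x, ?_⟩
  have := toIocMod_add_toIocDiv_zsmul Real.two_pi_pos (-Real.pi) x
  rw [wrap]
  push_cast [zsmul_eq_mul] at this ⊢
  linarith [this]

lemma notPiMod_neg {x : ℝ} (h : NotPiMod x) : NotPiMod (-x) := by
  intro k hk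
  exact h (-k - 1) (by push_cast; linarith)

lemma wrap_ne_pi {x : ℝ} (h : NotPiMod x) : wrap x ≠ Real.pi := by
  intro hw
  obtain ⟨k, hk⟩ := wrap_sub x
  exact h k (by rw [hw] at hk; linarith)

lemma wrap_mem_Ioo {x : ℝ} (h : NotPiMod x) : wrap x ∈ Set.Ioo (-Real.pi) Real.pi := by
  have hm := wrap_mem x
  exact ⟨hm.1, lt_of_le_of_ne hm.2 (wrap_ne_pi h)⟩

lemma wrap_neg {x : ℝ} (h : NotPiMod x) : wrap (-x) = -wrap x := by
  obtain ⟨k, hk⟩ := wrap_sub x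
  have hoo := wrap_mem_Ioo h
  rw [wrap, toIocMod_eq_iff Real.two_pi_pos]
  constructor
  · constructor
    · linarith [hoo.2]
    · have : -Real.pi + 2 * Real.pi = Real.pi := by ring
      rw [this]; linarith [hoo.1]
  · exact ⟨-k, by push_cast [zsmul_eq_mul]; linarith⟩

/-- Each cell curl is `-2π`, `0`, or `2π`. -/
lemma curl_mem {M : ℕ} (θ : ZMod M × ZMod M → ℝ)
    (hE : ∀ i j : ZMod M, NotPiMod (θ (i + 1, j) - θ (i, j)))
    (hN : ∀ i j : ZMod M, NotPiMod (θ (i, j + 1) - θ (i, j))) (i j : ZMod M) :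
    latticeCurl θ i j = -(2 * Real.pi) ∨ latticeCurl θ i j = 0 ∨
      latticeCurl θ i j = 2 * Real.pi := by
  set a := θ (i + 1, j) - θ (i, j) with ha
  set b := θ (i + 1, j + 1) - θ (i + 1, j) with hb
  set c := θ (i, j + 1) - θ (i + 1, j + 1) with hc
  set d := θ (i, j) - θ (i, j + 1) with hd
  have hA : NotPiMod a := hE i j
  have hB : NotPiMod b := hN (i + 1) j
  have hC : NotPiMod c := by
    have := notPiMod_neg (hE i (j + 1)); simpa [hc, neg_sub] using this
  have hD : NotPiMod d := by
    have := notPiMod_neg (hN i j); simpa [hd, neg_sub] using this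
  have habcd : a + b + c + d = 0 := by rw [ha, hb, hc, hd]; ring
  obtain ⟨ka, hka⟩ := wrap_sub a
  obtain ⟨kb, hkb⟩ := wrap_sub b
  obtain ⟨kc, hkc⟩ := wrap_sub c
  obtain ⟨kd, hkd⟩ := wrap_sub d
  have hcurl : latticeCurl θ i j = -((ka + kb + kc + kd : ℤ) : ℝ) * (2 * Real.pi) := by
    rw [latticeCurl, ← ha, ← hb, ← hc, ← hd]
    push_cast
    nlinarith [habcd, hka, hkb, hkc, hkd]
  have hbound : |latticeCurl θ i j| < 4 * Real.pi := by
    have moa := wrap_mem_Ioo hA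
    have mob := wrap_mem_Ioo hB
    have moc := wrap_mem_Ioo hC
    have mod := wrap_mem_Ioo hD
    rw [latticeCurl, ← ha, ← hb, ← hc, ← hd, abs_lt]
    constructor <;> [nlinarith [moa.1, mob.1, moc.1, mod.1];
      nlinarith [moa.2, mob.2, moc.2, mod.2]]
  set K : ℤ := ka + kb + kc + kd with hK
  have hKb : |(K : ℝ)| < 2 := by
    rw [hcurl] at hbound
    rw [abs_mul, abs_neg] at hbound
    have h2p : |2 * Real.pi| = 2 * Real.pi := abs_of_pos Real.two_pi_pos
    rw [h2p] at hbound
    nlinarith [abs_nonneg (K : ℝ), Real.pi_pos]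
  have hKi : K = -1 ∨ K = 0 ∨ K = 1 := by
    have h2 : |K| < 2 := by exact_mod_cast (by rwa [← Int.cast_abs] at hKb : ((|K| : ℤ) : ℝ) < 2)
    rw [abs_lt] at h2
    omega
  rcases hKi with h | h | h
  · right; right; rw [hcurl, h]; push_cast; ring
  · right; left; rw [hcurl, h]; push_cast; ring
  · left; rw [hcurl, h]; push_cast; ring

open scoped Classical in
/-- On the `M × M` torus (`M ≥ 2`), if no nearest-neighbor phase difference is congruent
to `π` mod `2π`, then positive phase vortices (cells of curl `+2π`) and negative phase
vortices (cells of curl `−2π`) occur in equal numbers. -/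
theorem card_pos_vortices_eq_card_neg_vortices (M : ℕ) [NeZero M] (hM : 2 ≤ M)
    (θ : ZMod M × ZMod M → ℝ)
    (hE : ∀ i j : ZMod M, NotPiMod (θ (i + 1, j) - θ (i, j)))
    (hN : ∀ i j : ZMod M, NotPiMod (θ (i, j + 1) - θ (i, j))) :
    (Finset.univ.filter fun c : ZMod M × ZMod M =>
        latticeCurl θ c.1 c.2 = 2 * Real.pi).card =
      (Finset.univ.filter fun c : ZMod M × ZMod M =>
        latticeCurl θ c.1 c.2 = -(2 * Real.pi)).card := by
  -- Total curl vanishes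
  have htot : ∑ c : ZMod M × ZMod M, latticeCurl θ c.1 c.2 = 0 := by
    have e3 : ∑ c : ZMod M × ZMod M, wrap (θ (c.1, c.2 + 1) - θ (c.1 + 1, c.2 + 1)) =
        ∑ c : ZMod M × ZMod M, wrap (θ (c.1, c.2) - θ (c.1 + 1, c.2)) := by
      refine Fintype.sum_equiv ((Equiv.refl (ZMod M)).prodCongr (Equiv.addRight (1 : ZMod M)))
        _ _ ?_
      intro c
      simp [Equiv.prodCongr]
    have e2 : ∑ c : ZMod M × ZMod M, wrap (θ (c.1 + 1, c.2 + 1) - θ (c.1 + 1, c.2)) =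
        ∑ c : ZMod M × ZMod M, wrap (θ (c.1, c.2 + 1) - θ (c.1, c.2)) := by
      refine Fintype.sum_equiv ((Equiv.addRight (1 : ZMod M)).prodCongr (Equiv.refl (ZMod M)))
        _ _ ?_
      intro c
      simp [Equiv.prodCongr]
    have expand : ∑ c : ZMod M × ZMod M, latticeCurl θ c.1 c.2 =
        (∑ c : ZMod M × ZMod M, wrap (θ (c.1 + 1, c.2) - θ (c.1, c.2)) +
         ∑ c : ZMod M × ZMod M, wrap (θ (c.1, c.2 + 1) - θ (c.1 + 1, c.2 + 1))) +
        (∑ c : ZMod M × ZMod M, wrap (θ (c.1 + 1, c.2 + 1) - θ (c.1 + 1, c.2)) +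
         ∑ c : ZMod M × ZMod M, wrap (θ (c.1, c.2) - θ (c.1, c.2 + 1))) := by
      simp only [latticeCurl, Finset.sum_add_distrib]
      ring
    rw [expand, e2, e3, ← Finset.sum_add_distrib, ← Finset.sum_add_distrib]
    have z1 : ∑ c : ZMod M × ZMod M, (wrap (θ (c.1 + 1, c.2) - θ (c.1, c.2)) +
        wrap (θ (c.1, c.2) - θ (c.1 + 1, c.2))) = 0 := by
      apply Finset.sum_eq_zero
      intro c _
      have h := wrap_neg (hE c.1 c.2)
      rw [neg_sub] at h
      rw [h]; ring
    have z2 : ∑ c : ZMod M × ZMod M, (wrap (θ (c.1, c.2 + 1) - θ (c.1, c.2)) +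
        wrap (θ (c.1, c.2) - θ (c.1, c.2 + 1))) = 0 := by
      apply Finset.sum_eq_zero
      intro c _
      have h := wrap_neg (hN c.1 c.2)
      rw [neg_sub] at h
      rw [h]; ring
    rw [z1, z2, add_zero]
  -- split the total into filters
  set P := Finset.univ.filter fun c : ZMod M × ZMod M =>
    latticeCurl θ c.1 c.2 = 2 * Real.pi with hP
  set N := Finset.univ.filter fun c : ZMod M × ZMod M =>
    latticeCurl θ c.1 c.2 = -(2 * Real.pi) with hNdef
  have hpi := Real.pi_pos
  have hne : (2 * Real.pi : ℝ) ≠ -(2 * Real.pi) := by linarith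
  have hsum : ∑ c : ZMod M × ZMod M, latticeCurl θ c.1 c.2 =
      (P.card : ℝ) * (2 * Real.pi) - (N.card : ℝ) * (2 * Real.pi) := by
    rw [← Finset.sum_filter_add_sum_filter_not Finset.univ
      (fun c : ZMod M × ZMod M => latticeCurl θ c.1 c.2 = 2 * Real.pi)]
    have e1 : ∑ c ∈ P, latticeCurl θ c.1 c.2 = (P.card : ℝ) * (2 * Real.pi) := by
      rw [Finset.sum_congr rfl (fun c hc => (Finset.mem_filter.1 hc).2), Finset.sum_const,
        nsmul_eq_mul]
    have hsub : (Finset.univ.filter fun c : ZMod M × ZMod M =>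
        ¬latticeCurl θ c.1 c.2 = 2 * Real.pi).filter
        (fun c => latticeCurl θ c.1 c.2 = -(2 * Real.pi)) = N := by
      rw [Finset.filter_filter, hNdef]
      apply Finset.filter_congr
      intro c _
      constructor
      · exact fun h => h.2
      · exact fun h => ⟨by rw [h]; exact fun hh => hne hh.symm, h⟩
    have e2 : ∑ c ∈ Finset.univ.filter (fun c : ZMod M × ZMod M =>
        ¬latticeCurl θ c.1 c.2 = 2 * Real.pi), latticeCurl θ c.1 c.2 =
        -((N.card : ℝ) * (2 * Real.pi)) := by
      rw [← Finset.sum_filter_add_sum_filter_not _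
        (fun c : ZMod M × ZMod M => latticeCurl θ c.1 c.2 = -(2 * Real.pi))]
      rw [hsub]
      have : ∑ c ∈ N, latticeCurl θ c.1 c.2 = -((N.card : ℝ) * (2 * Real.pi)) := by
        rw [Finset.sum_congr rfl (fun c hc => (Finset.mem_filter.1 hc).2), Finset.sum_const,
          nsmul_eq_mul]; ring
      rw [this]
      have hz : ∑ c ∈ (Finset.univ.filter fun c : ZMod M × ZMod M =>
          ¬latticeCurl θ c.1 c.2 = 2 * Real.pi).filter
          (fun c => ¬latticeCurl θ c.1 c.2 = -(2 * Real.pi)), latticeCurl θ c.1 c.2 = 0 := by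
        apply Finset.sum_eq_zero
        intro c hc
        rw [Finset.filter_filter, Finset.mem_filter] at hc
        rcases curl_mem θ hE hN c.1 c.2 with h | h | h
        · exact absurd h hc.2.2
        · exact h
        · exact absurd h hc.2.1
      rw [hz]; ring
    rw [e1, e2]; ring
  rw [htot] at hsum
  have : (P.card : ℝ) = (N.card : ℝ) := by
    have h2pi : (2 * Real.pi : ℝ) ≠ 0 := by positivity
    have h : (P.card : ℝ) * (2 * Real.pi) = (N.card : ℝ) * (2 * Real.pi) := by linarith
    exact mul_right_cancel₀ h2pi h
  exact_mod_cast this
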